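/- For every positive integer n, N(n) ≤ ⌊(2n+1)/3⌋. -/

import Mathlib

/-- The triangle of size `n`: cells `(a,b)` with `1 ≤ b ≤ a ≤ n`. -/
def Triangle (n : ℕ) : Finset (ℕ × ℕ) :=
  (Finset.Icc 1 n ×ˢ Finset.Icc 1 n).filter (fun p => p.2 ≤ p.1)

/-- No two distinct cells share a row (`a`), a column (`b`), or a standard
diagonal (value `a - b`). -/
def NonAttacking (S : Finset (ℕ × ℕ)) : Prop :=
  ∀ p ∈ S, ∀ q ∈ S, p ≠ q →
    p.1 ≠ q.1 ∧ p.2 ≠ q.2 ∧ (p.1 : ℤ) - p.2 ≠ (q.1 : ℤ) - q.2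

/-- `N(n)`: the maximum size of a non-attacking set of cells in the triangle of size `n`. -/
noncomputable def maxDots (n : ℕ) : ℕ :=
  sSup {m : ℕ | ∃ S : Finset (ℕ × ℕ), S ⊆ Triangle n ∧ NonAttacking S ∧ S.card = m}

/-- `N(n) ≤ ⌊(2n+1)/3⌋` for every positive integer `n`. -/
theorem aux1 (T : Finset ℕ) : ∑ i ∈ Finset.range T.card, i ≤ ∑ x ∈ T, x := by
  induction T using Finset.strongInduction with
  | _ T ih =>
    rcases T.eq_empty_or_nonempty with rfl | hT
    · simp
    · have hm : T.max' hT ∈ T := T.max'_mem hT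
      have hsub : T ⊆ Finset.range (T.max' hT + 1) := fun x hx =>
        Finset.mem_range.mpr (Nat.lt_succ_of_le (T.le_max' x hx))
      have hcard : T.card ≤ T.max' hT + 1 := by
        simpa using Finset.card_le_card hsub
      have h1 : 1 ≤ T.card := Finset.card_pos.mpr hT
      have key := ih (T.erase (T.max' hT)) (Finset.erase_ssubset hm)
      have hc : (T.erase (T.max' hT)).card = T.card - 1 := Finset.card_erase_of_mem hm
      rw [hc] at key
      have hsum : ∑ x ∈ T, x = T.max' hT + ∑ x ∈ T.erase (T.max' hT), x :=
        (Finset.add_sum_erase _ _ hm).symm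
      have hr : T.card = (T.card - 1) + 1 := (Nat.succ_pred_eq_of_pos h1).symm
      rw [hsum, hr, Finset.sum_range_succ]
      omega

theorem aux2 (T : Finset ℕ) (h : ∀ x ∈ T, 1 ≤ x) :
    ∑ i ∈ Finset.range T.card, (i + 1) ≤ ∑ x ∈ T, x := by
  have hinj : Set.InjOn (fun x => x - 1) T := fun a ha b hb hab => by
    have := h a ha; have := h b hb; simp only at hab; omega
  have hcard : (T.image (fun x => x - 1)).card = T.card :=
    Finset.card_image_of_injOn hinj
  have h1 := aux1 (T.image (fun x => x - 1))
  rw [hcard, Finset.sum_image hinj] at h1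
  have h2 : ∑ x ∈ T, (x - 1 + 1) = ∑ x ∈ T, x :=
    Finset.sum_congr rfl fun x hx => by have := h x hx; omega
  rw [Finset.sum_add_distrib] at *
  simp only [Finset.sum_const, Finset.card_range, smul_eq_mul, mul_one] at *
  omega

theorem auxIcc (n : ℕ) : ∑ x ∈ Finset.Icc 1 n, x = ∑ i ∈ Finset.range (n + 1), i := by
  induction n with
  | zero => simp
  | succ m ih => rw [Finset.sum_Icc_succ_top (by omega), Finset.sum_range_succ, ih]

theorem final (k n : ℕ) (hk : 1 ≤ k) (hkn : k ≤ n)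
    (H : k*(k-1) + (k*(k-1) + 2*k) + ((n-k)*(n-k-1) + 2*(n-k)) ≤ (n+1)*n) :
    3*k ≤ 2*n+1 := by
  obtain ⟨j, rfl⟩ := Nat.exists_eq_add_of_le hk
  obtain ⟨m, rfl⟩ := Nat.exists_eq_add_of_le hkn
  have e1 : 1 + j - 1 = j := by omega
  have e2 : 1 + j + m - (1 + j) = m := by omega
  rw [e1, e2] at H
  rcases m with _ | m
  · simp at H ⊢; nlinarith
  · simp only [Nat.add_sub_cancel] at H; nlinarith

theorem key_bound (n : ℕ) (S : Finset (ℕ × ℕ)) (hS : S ⊆ Triangle n)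
    (hNA : NonAttacking S) : 3 * S.card ≤ 2 * n + 1 := by
  set k := S.card with hk
  rcases Nat.eq_zero_or_pos k with h0 | hpos
  · omega
  have hmem : ∀ p ∈ S, 1 ≤ p.2 ∧ p.2 ≤ p.1 ∧ p.1 ≤ n := by
    intro p hp
    have := hS hp
    simp only [Triangle, Finset.mem_filter, Finset.mem_product, Finset.mem_Icc] at this
    omega
  have hinj2 : Set.InjOn Prod.snd (S : Set (ℕ × ℕ)) := by
    intro p hp q hq h
    rw [Finset.mem_coe] at hp hq
    by_contra hne
    exact (hNA p hp q hq hne).2.1 h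
  have hinj1 : Set.InjOn Prod.fst (S : Set (ℕ × ℕ)) := by
    intro p hp q hq h
    rw [Finset.mem_coe] at hp hq
    by_contra hne
    exact (hNA p hp q hq hne).1 h
  have hinjd : Set.InjOn (fun p : ℕ × ℕ => p.1 - p.2) (S : Set (ℕ × ℕ)) := by
    intro p hp q hq h
    rw [Finset.mem_coe] at hp hq
    by_contra hne
    have h1 := hmem p hp
    have h2 := hmem q hq
    apply (hNA p hp q hq hne).2.2
    simp only at h
    rw [← Nat.cast_sub h1.2.1, ← Nat.cast_sub h2.2.1, h]
  have hfsub : S.image Prod.fst ⊆ Finset.Icc 1 n := by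
    intro x hx
    obtain ⟨p, hp, rfl⟩ := Finset.mem_image.mp hx
    have := hmem p hp
    exact Finset.mem_Icc.mpr ⟨le_trans this.1 this.2.1, this.2.2⟩
  have hB : ∑ i ∈ Finset.range k, (i + 1) ≤ ∑ p ∈ S, p.2 := by
    have hsub : S.image Prod.snd ⊆ Finset.Icc 1 n := by
      intro x hx
      obtain ⟨p, hp, rfl⟩ := Finset.mem_image.mp hx
      have := hmem p hp
      exact Finset.mem_Icc.mpr ⟨this.1, le_trans this.2.1 this.2.2⟩
    have := aux2 (S.image Prod.snd) (fun x hx => (Finset.mem_Icc.mp (hsub hx)).1)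
    rwa [Finset.card_image_of_injOn hinj2, Finset.sum_image hinj2] at this
  have hD : ∑ i ∈ Finset.range k, i ≤ ∑ p ∈ S, (p.1 - p.2) := by
    have := aux1 (S.image (fun p : ℕ × ℕ => p.1 - p.2))
    rwa [Finset.card_image_of_injOn hinjd, Finset.sum_image hinjd] at this
  have hkn : k ≤ n := by
    calc k = (S.image Prod.fst).card := (Finset.card_image_of_injOn hinj1).symm
    _ ≤ (Finset.Icc 1 n).card := Finset.card_le_card hfsub
    _ = n := by simp
  have hA : ∑ p ∈ S, p.1 + ∑ i ∈ Finset.range (n - k), (i + 1)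
      ≤ ∑ x ∈ Finset.Icc 1 n, x := by
    have hsplit : ∑ x ∈ Finset.Icc 1 n, x =
        ∑ x ∈ S.image Prod.fst, x + ∑ x ∈ Finset.Icc 1 n \ S.image Prod.fst, x := by
      rw [add_comm]; exact (Finset.sum_sdiff hfsub).symm
    have hcardc : (Finset.Icc 1 n \ S.image Prod.fst).card = n - k := by
      rw [Finset.card_sdiff_of_subset hfsub, Finset.card_image_of_injOn hinj1]
      simp [← hk]
    have hc := aux2 (Finset.Icc 1 n \ S.image Prod.fst)
      (fun x hx => (Finset.mem_Icc.mp (Finset.mem_sdiff.mp hx).1).1)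
    rw [hcardc] at hc
    rw [hsplit, Finset.sum_image hinj1]
    omega
  have hsumeq : ∑ p ∈ S, p.1 = ∑ p ∈ S, (p.1 - p.2) + ∑ p ∈ S, p.2 := by
    rw [← Finset.sum_add_distrib]
    exact Finset.sum_congr rfl fun p hp => by have := hmem p hp; omega
  have hcomb : ∑ i ∈ Finset.range k, i + ∑ i ∈ Finset.range k, (i + 1)
      + ∑ i ∈ Finset.range (n - k), (i + 1) ≤ ∑ x ∈ Finset.Icc 1 n, x := by
    linarith
  -- rewrite shifted sums and Icc sum
  have hshift : ∀ m : ℕ, ∑ i ∈ Finset.range m, (i + 1) = ∑ i ∈ Finset.range m, i + m := by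
    intro m
    rw [Finset.sum_add_distrib]
    simp
  rw [hshift, hshift, auxIcc] at hcomb
  have H2 : k * (k - 1) + (k * (k - 1) + 2 * k)
      + ((n - k) * (n - k - 1) + 2 * (n - k)) ≤ (n + 1) * n := by
    have g1 := Finset.sum_range_id_mul_two k
    have g2 := Finset.sum_range_id_mul_two (n - k)
    have g3 := Finset.sum_range_id_mul_two (n + 1)
    simp only [Nat.add_sub_cancel] at g3
    omega
  exact final k n hpos hkn H2

theorem maxDots_upper_bound (n : ℕ) (hn : 1 ≤ n) :
    maxDots n ≤ (2 * n + 1) / 3 := by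
  apply csSup_le'
  rintro m ⟨S, hS, hNA, rfl⟩
  rw [Nat.le_div_iff_mul_le (by norm_num)]
  have := key_bound n S hS hNA
  omega
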